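/- For a bipartite simple graph G with a perfect matching, the number of perfect matchings of G is at most Π_{x ∈ X} (deg(x)!)^(1/deg(x)) where X is one part of the bipartition; equivalently, at most Π_{v ∈ V(G)} (deg(v)!)^(1/(2 deg(v))) follows from applying this to both parts and taking the geometric mean. -/

import Mathlib

open Finset

section BregmanAux

open Finset Real

/-- tangent-line: for `x ≥ 0`, `c > 0`: `x * log c + (x - c) ≤ x * log x`. -/
lemma tangent_ineq {x c : ℝ} (hx : 0 ≤ x) (hc : 0 < c) :
    x * Real.log c + (x - c) ≤ x * Real.log x := by
  rcases eq_or_lt_of_le hx with h | h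
  · rw [← h]; simp only [zero_mul, zero_sub, zero_add]; linarith
  · have h1 : Real.log (c / x) ≤ c / x - 1 := Real.log_le_sub_one_of_pos (by positivity)
    have h2 : Real.log (c / x) = Real.log c - Real.log x := Real.log_div hc.ne' h.ne'
    have h3 : x * Real.log (c / x) ≤ x * (c / x - 1) := by
      exact mul_le_mul_of_nonneg_left h1 hx
    rw [h2] at h3
    have : x * (c / x - 1) = c - x := by field_simp
    nlinarith [this]

/-- Convexity lemma (Schrijver): `(T/r)^T ≤ ∏ tᵢ^tᵢ` for naturals `tᵢ`. -/
lemma geom_lemma {ι : Type*} (s : Finset ι) (hs : s.Nonempty) (t : ι → ℕ) :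
    ((∑ i ∈ s, t i : ℕ) / (s.card : ℝ)) ^ ((∑ i ∈ s, t i : ℕ) : ℝ) ≤
      ∏ i ∈ s, (t i : ℝ) ^ (t i : ℝ) := by
  set T : ℕ := ∑ i ∈ s, t i with hT
  have hr : (0:ℝ) < s.card := by exact_mod_cast hs.card_pos
  rcases Nat.eq_zero_or_pos T with h0 | hTpos
  · have hz : ∀ i ∈ s, t i = 0 := Finset.sum_eq_zero_iff.mp h0
    rw [h0]
    simp only [Nat.cast_zero, Real.rpow_zero]
    rw [Finset.prod_congr rfl (fun i hi => by rw [hz i hi])]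
    simp
  · set c : ℝ := (T : ℝ) / s.card with hc
    have hcpos : 0 < c := by positivity
    have key : (T : ℝ) * Real.log c ≤ ∑ i ∈ s, (t i : ℝ) * Real.log (t i) := by
      have h1 : ∀ i ∈ s, (t i : ℝ) * Real.log c + ((t i : ℝ) - c) ≤ (t i : ℝ) * Real.log (t i) :=
        fun i _ => tangent_ineq (Nat.cast_nonneg _) hcpos
      have h2 := Finset.sum_le_sum h1
      rw [Finset.sum_add_distrib, ← Finset.sum_mul, Finset.sum_sub_distrib] at h2
      have h3 : (∑ i ∈ s, (t i : ℝ)) = (T : ℝ) := by rw [hT]; push_cast; ring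
      rw [h3] at h2
      simp only [Finset.sum_const, nsmul_eq_mul, hc] at h2
      have : (T:ℝ) - s.card * ((T:ℝ)/s.card) = 0 := by field_simp; ring
      linarith [h2, this]
    calc c ^ (T:ℝ) = Real.exp ((T:ℝ) * Real.log c) := by
          rw [Real.rpow_def_of_pos hcpos, mul_comm]
      _ ≤ Real.exp (∑ i ∈ s, (t i : ℝ) * Real.log (t i)) := Real.exp_le_exp.mpr key
      _ = ∏ i ∈ s, Real.exp ((t i : ℝ) * Real.log (t i)) := by rw [Real.exp_sum]
      _ = ∏ i ∈ s, (t i : ℝ) ^ (t i : ℝ) := by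
          refine Finset.prod_congr rfl fun i _ => ?_
          rcases Nat.eq_zero_or_pos (t i) with h | h
          · simp [h]
          · rw [Real.rpow_def_of_pos (by exact_mod_cast h), mul_comm]

def bminor {n : ℕ} (M : Matrix (Fin (n+1)) (Fin (n+1)) ℕ) (k c : Fin (n+1)) :
    Matrix (Fin n) (Fin n) ℕ := M.submatrix k.succAbove c.succAbove

lemma core {n : ℕ} (M : Matrix (Fin (n+1)) (Fin (n+1)) ℕ) (k c : Fin (n+1)) :
    ∑ σ ∈ univ.filter (fun σ : Equiv.Perm (Fin (n+1)) => σ c = k), ∏ i, M (σ i) i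
      = M k c * (bminor M k c).permanent := by
  classical
  set φ : Equiv.Perm (Fin n) → Equiv.Perm (Fin (n+1)) :=
    fun τ => (finSuccEquiv' c).trans ((Equiv.optionCongr τ).trans (finSuccEquiv' k).symm) with hφ
  have hφc : ∀ τ, φ τ c = k := by
    intro τ; simp [hφ, finSuccEquiv'_at, finSuccEquiv'_symm_none]
  have hφs : ∀ τ i, φ τ (c.succAbove i) = k.succAbove (τ i) := by
    intro τ i; simp [hφ, finSuccEquiv'_succAbove, finSuccEquiv'_symm_some]
  rw [Matrix.permanent, Finset.mul_sum]
  refine (Finset.sum_bij (fun τ _ => φ τ) ?_ ?_ ?_ ?_).symm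
  · intro τ _; simp [Finset.mem_filter, hφc]
  · intro τ _ τ' _ h
    refine Equiv.ext fun i => ?_
    have := congrArg (fun σ : Equiv.Perm (Fin (n+1)) => σ (c.succAbove i)) h
    simp only [hφs] at this
    exact Fin.succAbove_right_injective this
  · intro σ hσ
    have hσc : σ c = k := (Finset.mem_filter.mp hσ).2
    have hex : ∀ i : Fin n, ∃ j : Fin n, k.succAbove j = σ (c.succAbove i) := by
      intro i
      refine Fin.exists_succAbove_eq ?_
      rw [← hσc]
      exact fun h => (Fin.succAbove_ne c i) (σ.injective h)
    choose f hf using hex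
    have hfinj : Function.Injective f := by
      intro a b hab
      have h2 : σ (c.succAbove a) = σ (c.succAbove b) := by rw [← hf a, ← hf b, hab]
      exact Fin.succAbove_right_injective (σ.injective h2)
    refine ⟨Equiv.ofBijective f (Finite.injective_iff_bijective.mp hfinj), Finset.mem_univ _,
      Equiv.ext fun x => ?_⟩
    refine Fin.succAboveCases c ?_ ?_ x
    · rw [hφc]; exact hσc.symm
    · intro i; rw [hφs]; exact hf i
  · intro τ _
    rw [Fin.prod_univ_succAbove (fun i => M (φ τ i) i) c, hφc]
    congr 1
    refine Finset.prod_congr rfl fun i _ => ?_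
    rw [hφs]; rfl

lemma prod_indicator01 {n : ℕ} (M : Matrix (Fin n) (Fin n) ℕ) (h : ∀ i j, M i j ≤ 1)
    (σ : Equiv.Perm (Fin n)) :
    ∏ i, M (σ i) i = if (∀ i, M (σ i) i = 1) then 1 else 0 := by
  split_ifs with hc
  · exact Finset.prod_eq_one fun i _ => hc i
  · push_neg at hc
    obtain ⟨i, hi⟩ := hc
    refine Finset.prod_eq_zero (Finset.mem_univ i) ?_
    have := h (σ i) i
    omega

lemma prod_succAbove_erase {n : ℕ} {β : Type*} [CommMonoid β] (k : Fin (n+1))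
    (g : Fin (n+1) → β) :
    ∏ i : Fin n, g (k.succAbove i) = ∏ u ∈ univ.erase k, g u := by
  refine Finset.prod_bij (fun i _ => k.succAbove i) ?_ ?_ ?_ ?_
  · intro i _; exact Finset.mem_erase.mpr ⟨Fin.succAbove_ne k i, Finset.mem_univ _⟩
  · intro a _ b _ hab; exact Fin.succAbove_right_injective hab
  · intro u hu
    obtain ⟨i, hi⟩ := Fin.exists_succAbove_eq (Finset.mem_erase.mp hu).1
    exact ⟨i, Finset.mem_univ _, hi⟩
  · intro i _; rfl

lemma fact_rpow_pow (a : ℕ) :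
    ((a.factorial : ℝ) ^ (1/(a:ℝ))) ^ (a:ℕ) = (a.factorial : ℝ) := by
  rcases Nat.eq_zero_or_pos a with h | h
  · simp [h]
  · have hfa : (0:ℝ) < a.factorial := by exact_mod_cast a.factorial_pos
    rw [← Real.rpow_natCast (((a.factorial : ℝ)) ^ (1/(a:ℝ))) a, ← Real.rpow_mul hfa.le,
      one_div, inv_mul_cancel₀ (by exact_mod_cast h.ne' : (a:ℝ) ≠ 0), Real.rpow_one]

lemma factorial_pow_aux (a N : ℕ) (ha : 1 ≤ a) (haN : a ≤ N) :
    (a:ℝ) * ((((a-1).factorial : ℝ)) ^ (1/((a-1 : ℕ):ℝ))) ^ ((a-1 : ℕ)) *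
      (((a.factorial : ℝ)) ^ (1/(a:ℝ))) ^ ((N-a : ℕ))
      = (a.factorial : ℝ) ^ ((N:ℝ)/(a:ℝ)) := by
  have ha' : (0:ℝ) < a := by exact_mod_cast ha
  have hfa : (0:ℝ) < a.factorial := by exact_mod_cast a.factorial_pos
  have h1 : (a:ℝ) * ((a-1).factorial : ℝ) = (a.factorial : ℝ) := by
    rw [← Nat.cast_mul, Nat.mul_factorial_pred (by omega)]
  have h2 : ((N - a : ℕ) : ℝ) = (N:ℝ) - a := Nat.cast_sub haN
  rw [fact_rpow_pow, h1, ← Real.rpow_natCast ((a.factorial:ℝ) ^ (1/(a:ℝ))) (N-a),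
    ← Real.rpow_mul hfa.le, h2,
    show (a.factorial:ℝ) * (a.factorial:ℝ)^(1/(a:ℝ)*((N:ℝ)-a))
        = (a.factorial:ℝ)^(1 + 1/(a:ℝ)*((N:ℝ)-a)) from by rw [Real.rpow_add hfa, Real.rpow_one]]
  congr 1
  field_simp
  ring

set_option maxHeartbeats 1000000 in
theorem bregman : ∀ (n : ℕ) (A : Matrix (Fin n) (Fin n) ℕ), (∀ i j, A i j ≤ 1) →
    (A.permanent : ℝ) ≤ ∏ k, (((∑ j, A k j).factorial : ℝ)) ^ (1/((∑ j, A k j : ℕ) : ℝ)) := by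
  intro n
  induction n with
  | zero =>
    intro A _
    simp [Matrix.permanent_isEmpty]
  | succ n ih =>
    intro A hA
    classical
    set r : Fin (n+1) → ℕ := fun k => ∑ j, A k j with hr
    set S : Finset (Equiv.Perm (Fin (n+1))) :=
      univ.filter (fun σ => ∀ i, A (σ i) i = 1) with hS
    set m : Fin (n+1) → Fin (n+1) → ℕ := fun k c => (bminor A k c).permanent with hm
    set P : ℕ := A.permanent with hP
    have hPS : P = S.card := by
      rw [hP, Matrix.permanent, Finset.sum_congr rfl (fun σ _ => prod_indicator01 A hA σ),
        Finset.sum_boole, hS, Nat.cast_id]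
    have hSfib : ∀ k c, (S.filter (fun σ => σ c = k)).card = A k c * m k c := by
      intro k c
      rw [← core A k c, Finset.sum_congr rfl (fun σ _ => prod_indicator01 A hA σ),
        Finset.sum_boole, Nat.cast_id, hS, Finset.filter_comm]
    have hfibiff : ∀ (k c : Fin (n+1)) (σ : Equiv.Perm (Fin (n+1))), σ⁻¹ k = c ↔ σ c = k := by
      intro k c σ
      constructor
      · rintro rfl; exact (Equiv.eq_symm_apply σ).mp rfl
      · rintro rfl; exact Equiv.Perm.inv_eq_iff_eq.mpr rfl
    have hrow : ∀ k, P = ∑ c, A k c * m k c := by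
      intro k
      rw [hPS, Finset.card_eq_sum_card_fiberwise
        (f := fun σ => σ⁻¹ k) (t := univ) (fun _ _ => mem_univ _)]
      refine Finset.sum_congr rfl fun c _ => ?_
      rw [← hSfib k c]
      congr 1
      exact Finset.filter_congr fun σ _ => by simp only [hfibiff k c σ]
    have hsk_card : ∀ k, (univ.filter (fun c => A k c = 1)).card = r k := by
      intro k
      rw [Finset.card_filter, hr]
      exact Finset.sum_congr rfl fun j _ => by have := hA k j; split_ifs with h <;> omega
    have hrow' : ∀ k, P = ∑ c ∈ univ.filter (fun c => A k c = 1), m k c := by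
      intro k
      rw [hrow k, Finset.sum_filter]
      refine Finset.sum_congr rfl fun c _ => ?_
      by_cases h : A k c = 1
      · simp [h]
      · have h0 : A k c = 0 := by have := hA k c; omega
        simp [h0]
    rcases Nat.eq_zero_or_pos P with hP0 | hPpos
    · rw [hP0]
      push_cast
      positivity
    -- main case
    have hSne : S.Nonempty := Finset.card_pos.mp (hPS ▸ hPpos)
    have hrk : ∀ k, 1 ≤ r k := by
      intro k
      obtain ⟨σ, hσ⟩ := hSne
      have hAσ : ∀ c, A (σ c) c = 1 := (Finset.mem_filter.mp hσ).2
      have h1 : A k (σ⁻¹ k) = 1 := by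
        have := hAσ (σ⁻¹ k); rwa [← Equiv.Perm.mul_apply, mul_inv_cancel, Equiv.Perm.one_apply] at this
      calc 1 = A k (σ⁻¹ k) := h1.symm
        _ ≤ ∑ j, A k j := Finset.single_le_sum (fun j _ => Nat.zero_le _) (Finset.mem_univ _)
    have hrkN : ∀ k, r k ≤ n + 1 := by
      intro k
      calc r k ≤ ∑ _j : Fin (n+1), 1 := Finset.sum_le_sum (fun j _ => hA k j)
        _ = n + 1 := by simp
    -- step (c)
    have step_c : ∀ k, ((P:ℝ))^((P:ℕ):ℝ) ≤ ∏ σ ∈ S, ((r k : ℝ) * (m k (σ⁻¹ k) : ℝ)) := by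
      intro k
      have hrkpos : (0:ℝ) < r k := by exact_mod_cast hrk k
      have hsk : (univ.filter (fun c => A k c = 1)).Nonempty := by
        rw [← Finset.card_pos, hsk_card k]; exact hrk k
      have ha := geom_lemma (univ.filter (fun c => A k c = 1)) hsk (fun c => m k c)
      rw [hsk_card k, ← hrow' k] at ha
      have hinner : ∀ c : Fin (n+1), ∏ σ ∈ S.filter (fun σ => σ⁻¹ k = c), ((m k (σ⁻¹ k)):ℝ)
          = ((m k c : ℝ))^((A k c * m k c : ℕ)) := by
        intro c
        rw [Finset.prod_congr rfl (fun σ hσ => by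
          rw [(Finset.mem_filter.mp hσ).2]), Finset.prod_const]
        congr 1
        rw [← hSfib k c]
        congr 1
        exact Finset.filter_congr fun σ _ => by simp only [hfibiff k c σ]
      have hb : ∏ σ ∈ S, ((m k (σ⁻¹ k)) : ℝ)
          = ∏ c ∈ univ.filter (fun c => A k c = 1), ((m k c:ℝ))^(((m k c:ℕ)):ℝ) := by
        rw [← Finset.prod_fiberwise_of_maps_to (g := fun σ : Equiv.Perm (Fin (n+1)) => σ⁻¹ k)
          (fun σ _ => Finset.mem_univ _) (fun σ => ((m k (σ⁻¹ k)):ℝ)),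
          Finset.prod_congr rfl (fun c _ => hinner c),
          ← Finset.prod_filter_mul_prod_filter_not univ (fun c => A k c = 1)]
        have h0 : ∏ c ∈ univ.filter (fun c => ¬ A k c = 1),
            ((m k c:ℝ))^((A k c * m k c : ℕ)) = 1 := by
          refine Finset.prod_eq_one fun c hc => ?_
          have h1 : A k c = 0 := by
            have := hA k c; have := (Finset.mem_filter.mp hc).2; omega
          simp [h1]
        rw [h0, mul_one]
        refine Finset.prod_congr rfl fun c hc => ?_
        have h1 : A k c = 1 := (Finset.mem_filter.mp hc).2
        rw [h1, one_mul, Real.rpow_natCast]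
      have hc3 : ((P:ℝ))^((P:ℕ):ℝ)
          = (((P:ℕ):ℝ)/((r k):ℝ))^((P:ℕ):ℝ) * ((r k:ℝ))^((P:ℕ):ℝ) := by
        rw [← Real.mul_rpow (by positivity) (by positivity), div_mul_cancel₀]
        exact hrkpos.ne'
      have hc4 : ((r k:ℝ))^((P:ℕ):ℝ) = ∏ _σ ∈ S, ((r k):ℝ) := by
        rw [Finset.prod_const, ← hPS, Real.rpow_natCast]
      rw [hc3]
      calc (((P:ℕ):ℝ)/((r k):ℝ))^((P:ℕ):ℝ) * ((r k:ℝ))^((P:ℕ):ℝ)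
          ≤ (∏ c ∈ univ.filter (fun c => A k c = 1), ((m k c:ℝ))^(((m k c:ℕ)):ℝ))
              * ((r k:ℝ))^((P:ℕ):ℝ) :=
            mul_le_mul_of_nonneg_right ha (by positivity)
        _ = (∏ σ ∈ S, ((m k (σ⁻¹ k)):ℝ)) * ∏ _σ ∈ S, ((r k):ℝ) := by rw [← hb, hc4]
        _ = ∏ σ ∈ S, ((r k : ℝ) * (m k (σ⁻¹ k) : ℝ)) := by
            rw [← Finset.prod_mul_distrib]
            exact Finset.prod_congr rfl fun σ _ => by ring
    -- step (e)
    have step_e : ∀ σ ∈ S, ∏ k, ((r k : ℝ) * (m k (σ⁻¹ k) : ℝ))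
        ≤ ∏ u, (((r u).factorial : ℝ) ^ (1/((r u : ℕ):ℝ))) ^ ((n+1 : ℕ)) := by
      intro σ hσ
      have hAσ : ∀ c, A (σ c) c = 1 := (Finset.mem_filter.mp hσ).2
      have hAinv : ∀ u, A u (σ⁻¹ u) = 1 := fun u => by
        have := hAσ (σ⁻¹ u); rwa [← Equiv.Perm.mul_apply, mul_inv_cancel, Equiv.Perm.one_apply] at this
      have hminor_r : ∀ (k c : Fin (n+1)) (i : Fin n),
          ∑ j, (bminor A k c) i j = r (k.succAbove i) - A (k.succAbove i) c := by
        intro k c i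
        have h1 := Fin.sum_univ_succAbove (fun j => A (k.succAbove i) j) c
        have h2 : r (k.succAbove i) = ∑ j, A (k.succAbove i) j := rfl
        have h3 : ∑ j, (bminor A k c) i j = ∑ j : Fin n, A (k.succAbove i) (c.succAbove j) :=
          Finset.sum_congr rfl fun j _ => rfl
        omega
      have hIH : ∀ k c, ((m k c : ℕ) : ℝ) ≤ ∏ u ∈ univ.erase k,
          (((r u - A u c).factorial : ℝ)) ^ (1/(((r u - A u c : ℕ)):ℝ)) := by
        intro k c
        have h1 := ih (bminor A k c) (fun i j => hA _ _)
        rw [Finset.prod_congr rfl (fun i (_ : i ∈ univ) => by rw [hminor_r k c i])] at h1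
        rwa [prod_succAbove_erase k
          (fun u => (((r u - A u c).factorial : ℝ)) ^ (1/(((r u - A u c : ℕ)):ℝ)))] at h1
      have hufac : ∀ u : Fin (n+1),
          ∏ k ∈ univ.erase u,
            (((r u - A u (σ⁻¹ k)).factorial : ℝ)) ^ (1/(((r u - A u (σ⁻¹ k) : ℕ)):ℝ))
          = ((((r u - 1).factorial : ℝ)) ^ (1/(((r u - 1 : ℕ)):ℝ)))^((r u - 1 : ℕ)) *
            ((((r u).factorial : ℝ)) ^ (1/(((r u : ℕ)):ℝ)))^((n + 1 - r u : ℕ)) := by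
        intro u
        have hre : ∏ k ∈ univ.erase u,
            (((r u - A u (σ⁻¹ k)).factorial : ℝ)) ^ (1/(((r u - A u (σ⁻¹ k) : ℕ)):ℝ))
            = ∏ c ∈ univ.erase (σ⁻¹ u),
              (((r u - A u c).factorial : ℝ)) ^ (1/(((r u - A u c : ℕ)):ℝ)) := by
          refine Finset.prod_bij (fun k _ => σ⁻¹ k) ?_ ?_ ?_ ?_
          · intro k hk
            refine Finset.mem_erase.mpr ⟨fun h => (Finset.mem_erase.mp hk).1 ?_, Finset.mem_univ _⟩
            exact (Equiv.injective σ⁻¹) h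
          · intro a _ b _ h; exact (Equiv.injective σ⁻¹) h
          · intro c hc
            refine ⟨σ c, Finset.mem_erase.mpr ⟨?_, Finset.mem_univ _⟩, by simp⟩
            intro h
            exact (Finset.mem_erase.mp hc).1 (by rw [← h]; simp)
          · intros; rfl
        rw [hre, ← Finset.prod_filter_mul_prod_filter_not (univ.erase (σ⁻¹ u))
          (fun c => A u c = 1)]
        have hcard1 : ((univ.erase (σ⁻¹ u)).filter (fun c => A u c = 1)).card = r u - 1 := by
          rw [Finset.card_filter]
          have h1 : ∑ c ∈ univ.erase (σ⁻¹ u), (if A u c = 1 then 1 else 0)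
              = ∑ c ∈ univ.erase (σ⁻¹ u), A u c :=
            Finset.sum_congr rfl fun c _ => by have := hA u c; split_ifs with h <;> omega
          have h2 : ∑ c ∈ univ.erase (σ⁻¹ u), A u c + A u (σ⁻¹ u) = ∑ c, A u c :=
            Finset.sum_erase_add _ _ (Finset.mem_univ _)
          have h3 := hAinv u
          have h4 : r u = ∑ c, A u c := rfl
          omega
        have hcard0 : ((univ.erase (σ⁻¹ u)).filter (fun c => ¬ A u c = 1)).card
            = n + 1 - r u := by
          have h5 := Finset.card_filter_add_card_filter_not
            (s := univ.erase (σ⁻¹ u)) (p := fun c => A u c = 1)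
          have h6 : (univ.erase (σ⁻¹ u)).card = n := by
            rw [Finset.card_erase_of_mem (Finset.mem_univ _)]; simp
          have := hrk u; have := hrkN u
          omega
        have hT1 : ∏ c ∈ (univ.erase (σ⁻¹ u)).filter (fun c => A u c = 1),
            (((r u - A u c).factorial : ℝ)) ^ (1/(((r u - A u c : ℕ)):ℝ))
            = ((((r u - 1).factorial : ℝ)) ^ (1/(((r u - 1 : ℕ)):ℝ)))^((r u - 1 : ℕ)) := by
          rw [Finset.prod_congr rfl (fun c hc => by rw [(Finset.mem_filter.mp hc).2]),
            Finset.prod_const, hcard1]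
        have hT0 : ∏ c ∈ (univ.erase (σ⁻¹ u)).filter (fun c => ¬ A u c = 1),
            (((r u - A u c).factorial : ℝ)) ^ (1/(((r u - A u c : ℕ)):ℝ))
            = ((((r u).factorial : ℝ)) ^ (1/(((r u : ℕ)):ℝ)))^((n + 1 - r u : ℕ)) := by
          rw [Finset.prod_congr rfl (fun c hc => by
            have h1 : A u c = 0 := by
              have := hA u c; have := (Finset.mem_filter.mp hc).2; omega
            rw [h1, Nat.sub_zero]), Finset.prod_const, hcard0]
        rw [hT1, hT0]
      calc ∏ k, ((r k : ℝ) * (m k (σ⁻¹ k) : ℝ))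
          ≤ ∏ k, ((r k : ℝ) * ∏ u ∈ univ.erase k,
              (((r u - A u (σ⁻¹ k)).factorial : ℝ)) ^ (1/(((r u - A u (σ⁻¹ k) : ℕ)):ℝ))) := by
            refine Finset.prod_le_prod (fun k _ => by positivity) (fun k _ => ?_)
            refine mul_le_mul_of_nonneg_left (hIH k (σ⁻¹ k)) (by positivity)
        _ = (∏ k, (r k:ℝ)) * ∏ k, ∏ u ∈ univ.erase k,
              (((r u - A u (σ⁻¹ k)).factorial : ℝ)) ^ (1/(((r u - A u (σ⁻¹ k) : ℕ)):ℝ)) :=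
            Finset.prod_mul_distrib
        _ = (∏ u, (r u:ℝ)) * ∏ u, ∏ k ∈ univ.erase u,
              (((r u - A u (σ⁻¹ k)).factorial : ℝ)) ^ (1/(((r u - A u (σ⁻¹ k) : ℕ)):ℝ)) := by
            congr 1
            refine Finset.prod_comm' fun k u => ?_
            simp only [Finset.mem_erase, Finset.mem_univ, and_true, true_and]
            exact ne_comm
        _ = ∏ u, ((r u:ℝ) * ∏ k ∈ univ.erase u,
              (((r u - A u (σ⁻¹ k)).factorial : ℝ)) ^ (1/(((r u - A u (σ⁻¹ k) : ℕ)):ℝ))) :=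
            Finset.prod_mul_distrib.symm
        _ = ∏ u, (((r u).factorial : ℝ)) ^ (((n+1:ℕ):ℝ)/((r u:ℕ):ℝ)) := by
            refine Finset.prod_congr rfl fun u _ => ?_
            rw [hufac u, ← mul_assoc]
            exact factorial_pow_aux (r u) (n+1) (hrk u) (hrkN u)
        _ = ∏ u, (((r u).factorial : ℝ) ^ (1/((r u : ℕ):ℝ))) ^ ((n+1 : ℕ)) := by
            refine Finset.prod_congr rfl fun u _ => ?_
            have hf : (0:ℝ) < (r u).factorial := by exact_mod_cast (r u).factorial_pos
            rw [← Real.rpow_natCast (((r u).factorial : ℝ) ^ (1/((r u : ℕ):ℝ))) (n+1),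
              ← Real.rpow_mul hf.le]
            congr 1
            field_simp
    -- assemble
    set Q : ℝ := ∏ u, ((r u).factorial : ℝ) ^ (1/((r u : ℕ):ℝ)) with hQ
    have hQpos : 0 < Q := by
      rw [hQ]
      refine Finset.prod_pos fun u _ => ?_
      have : (0:ℝ) < (r u).factorial := by exact_mod_cast (r u).factorial_pos
      positivity
    have main : ((P:ℝ)^((P:ℕ):ℝ))^((n+1 : ℕ)) ≤ (Q^((n+1:ℕ)))^(P:ℕ) := by
      calc ((P:ℝ)^((P:ℕ):ℝ))^((n+1 : ℕ))
          = ∏ _k : Fin (n+1), ((P:ℝ))^((P:ℕ):ℝ) := by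
            rw [Finset.prod_const, Finset.card_univ, Fintype.card_fin]
        _ ≤ ∏ k, ∏ σ ∈ S, ((r k : ℝ) * (m k (σ⁻¹ k) : ℝ)) := by
            refine Finset.prod_le_prod (fun k _ => by positivity) (fun k _ => step_c k)
        _ = ∏ σ ∈ S, ∏ k, ((r k : ℝ) * (m k (σ⁻¹ k) : ℝ)) := Finset.prod_comm
        _ ≤ ∏ σ ∈ S, (∏ u, (((r u).factorial : ℝ) ^ (1/((r u : ℕ):ℝ))) ^ ((n+1 : ℕ))) := by
            refine Finset.prod_le_prod (fun σ _ => ?_) step_e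
            refine Finset.prod_nonneg fun k _ => by positivity
        _ = (Q^((n+1:ℕ)))^(P:ℕ) := by
            rw [Finset.prod_const, ← hPS, Finset.prod_pow]
    -- conclude
    have hfinal : (P:ℝ) ≤ Q := by
      by_contra hlt
      push_neg at hlt
      have hE : (0:ℝ) < ((P:ℕ):ℝ) * ((n+1:ℕ):ℝ) := by
        have : (0:ℝ) < (P:ℕ) := by exact_mod_cast hPpos
        positivity
      have l1 : ((P:ℝ)^((P:ℕ):ℝ))^((n+1 : ℕ)) = (P:ℝ)^(((P:ℕ):ℝ) * ((n+1:ℕ):ℝ)) := by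
        rw [← Real.rpow_natCast ((P:ℝ)^((P:ℕ):ℝ)) (n+1), ← Real.rpow_mul (by positivity)]
      have l2 : (Q^((n+1:ℕ)))^(P:ℕ) = Q^(((P:ℕ):ℝ) * ((n+1:ℕ):ℝ)) := by
        rw [← Real.rpow_natCast Q (n+1), ← Real.rpow_natCast _ P, ← Real.rpow_mul hQpos.le,
          mul_comm]
      have := Real.rpow_lt_rpow hQpos.le hlt hE
      rw [← l1, ← l2] at this
      exact absurd main (not_le.mpr this)
    exact hfinal


end BregmanAux

/-- For a bipartite simple graph `G` with parts `X, Y` of equal size `n` and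
every vertex of `X` of positive degree, the number of perfect matchings of `G`
is at most `∏_{x ∈ X} (deg x)! ^ (1 / deg x)`. -/
theorem perfmat_le_prod_degree_factorial_rpow_bipartite {n : ℕ}
    (G : SimpleGraph (Fin n ⊕ Fin n)) [DecidableRel G.Adj]
    (hX : ∀ i j, ¬ G.Adj (Sum.inl i) (Sum.inl j))
    (hY : ∀ i j, ¬ G.Adj (Sum.inr i) (Sum.inr j))
    (hdeg : ∀ i, 0 < G.degree (Sum.inl i)) :
    (Nat.card {M : G.Subgraph // M.IsPerfectMatching} : ℝ) ≤
      ∏ i : Fin n, ((G.degree (Sum.inl i)).factorial : ℝ) ^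
        (1 / (G.degree (Sum.inl i) : ℝ)) := by
  classical
  set A : Matrix (Fin n) (Fin n) ℕ :=
    fun i j => if G.Adj (Sum.inl i) (Sum.inr j) then 1 else 0 with hAdef
  have hA01 : ∀ i j, A i j ≤ 1 := fun i j => by simp only [hAdef]; split_ifs <;> omega
  have hA1 : ∀ i j, A i j = 1 ↔ G.Adj (Sum.inl i) (Sum.inr j) := fun i j => by
    simp only [hAdef]; split_ifs with h <;> simp [h]
  -- degree = row sum
  have hdegA : ∀ i, G.degree (Sum.inl i) = ∑ j, A i j := by
    intro i
    rw [← SimpleGraph.card_neighborFinset_eq_degree]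
    rw [show (∑ j, A i j) = (univ.filter (fun j => G.Adj (Sum.inl i) (Sum.inr j))).card from by
      rw [Finset.card_filter]]
    refine (Finset.card_bij (fun j _ => Sum.inr j) ?_ ?_ ?_).symm
    · intro j hj
      exact SimpleGraph.mem_neighborFinset G _ _ |>.mpr (Finset.mem_filter.mp hj).2
    · intro a _ b _ h; exact Sum.inr.inj h
    · intro w hw
      have hadj : G.Adj (Sum.inl i) w := (SimpleGraph.mem_neighborFinset G _ _).mp hw
      match w, hadj with
      | Sum.inl j, hadj => exact absurd hadj (hX i j)
      | Sum.inr j, hadj => exact ⟨j, Finset.mem_filter.mpr ⟨Finset.mem_univ _, hadj⟩, rfl⟩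
  -- matchings inject into compatible permutations
  have key : ∀ M : G.Subgraph, M.IsPerfectMatching →
      ∃ σ : Equiv.Perm (Fin n), (∀ c, G.Adj (Sum.inl (σ c)) (Sum.inr c)) ∧
        (∀ x y, M.Adj x y ↔ ((∃ c, x = Sum.inl (σ c) ∧ y = Sum.inr c) ∨
          (∃ c, x = Sum.inr c ∧ y = Sum.inl (σ c)))) := by
    intro M hM
    have h1 : ∀ c : Fin n, ∃! w, M.Adj (Sum.inr c) w := fun c => hM.1 (hM.2 _)
    choose w hw hwu using h1
    have h2 : ∀ c, ∃ j, w c = Sum.inl j := by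
      intro c
      match hq : w c with
      | Sum.inl j => exact ⟨j, rfl⟩
      | Sum.inr j =>
        have := M.adj_sub (hq ▸ hw c)
        exact absurd this (hY c j)
    choose g hg using h2
    have hgadj : ∀ c, M.Adj (Sum.inr c) (Sum.inl (g c)) := fun c => (hg c) ▸ hw c
    have hginj : Function.Injective g := by
      intro a b hab
      have h3 : ∃! v, M.Adj (Sum.inl (g a)) v := hM.1 (hM.2 _)
      obtain ⟨v, _, hvu⟩ := h3
      have ha' : M.Adj (Sum.inl (g a)) (Sum.inr a) := (hgadj a).symm
      have hb' : M.Adj (Sum.inl (g a)) (Sum.inr b) := hab ▸ (hgadj b).symm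
      have := (hvu _ ha').trans (hvu _ hb').symm
      exact Sum.inr.inj this
    refine ⟨Equiv.ofBijective g (Finite.injective_iff_bijective.mp hginj), fun c => ?_, ?_⟩
    · exact M.adj_sub (hgadj c).symm
    · intro x y
      constructor
      · intro hxy
        match x, y, hxy with
        | Sum.inr c, y, hxy =>
          right
          exact ⟨c, rfl, by rw [hwu c y hxy, hg c]; rfl⟩
        | Sum.inl j, Sum.inl j', hxy => exact absurd (M.adj_sub hxy) (hX j j')
        | Sum.inl j, Sum.inr c, hxy =>
          left
          refine ⟨c, ?_, rfl⟩
          have := hwu c _ hxy.symm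
          rw [hg c] at this
          rw [Sum.inl.inj this]
          rfl
      · rintro (⟨c, rfl, rfl⟩ | ⟨c, rfl, rfl⟩)
        · exact (hgadj c).symm
        · exact hgadj c
  -- the injection
  have hinj : ∃ f : {M : G.Subgraph // M.IsPerfectMatching} →
      {σ : Equiv.Perm (Fin n) // ∀ c, G.Adj (Sum.inl (σ c)) (Sum.inr c)},
      Function.Injective f := by
    choose σf hσf1 hσf2 using fun M : {M : G.Subgraph // M.IsPerfectMatching} => key M.1 M.2
    refine ⟨fun M => ⟨σf M, hσf1 M⟩, fun M M' h => ?_⟩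
    have hσ : σf M = σf M' := congrArg Subtype.val h
    refine Subtype.ext (SimpleGraph.Subgraph.ext ?_ ?_)
    · have h1 : M.1.verts = Set.univ := Set.eq_univ_of_forall M.2.2
      have h2 : M'.1.verts = Set.univ := Set.eq_univ_of_forall M'.2.2
      rw [h1, h2]
    · ext x y
      rw [hσf2 M x y, hσf2 M' x y, hσ]
  obtain ⟨f, hf⟩ := hinj
  have hcard1 : Nat.card {M : G.Subgraph // M.IsPerfectMatching} ≤
      Nat.card {σ : Equiv.Perm (Fin n) // ∀ c, G.Adj (Sum.inl (σ c)) (Sum.inr c)} :=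
    Nat.card_le_card_of_injective f hf
  have hcard2 : Nat.card {σ : Equiv.Perm (Fin n) // ∀ c, G.Adj (Sum.inl (σ c)) (Sum.inr c)}
      = A.permanent := by
    rw [Nat.card_eq_fintype_card, Fintype.card_subtype, Matrix.permanent,
      Finset.sum_congr rfl (fun σ _ => prod_indicator01 A hA01 σ), Finset.sum_boole,
      Nat.cast_id]
    congr 1
    exact Finset.filter_congr fun σ _ => by
      simp only [hA1]
  have hbreg := bregman n A hA01
  have hgoal : (Nat.card {M : G.Subgraph // M.IsPerfectMatching} : ℝ) ≤ (A.permanent : ℝ) := by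
    exact_mod_cast hcard2 ▸ hcard1
  refine hgoal.trans (hbreg.trans_eq ?_)
  exact Finset.prod_congr rfl fun i _ => by rw [hdegA i]
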